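/- Let p, q be real polynomials and let x_e < 0 < x_d be real numbers with p(x_e) = p(x_d) = 0, p'(x_e) ≠ 0, p'(x_d) ≠ 0, p(x) > 0 for all x ∈ (x_e, x_d), p(x)q(x)² ≠ 1 for all x ∈ (x_e, x_d), and q'(x) ≠ 0 for all x ∈ (x_e, x_d). Then there exist T > 0 and a non-constant T-periodic differentiable curve γ = (γ₁, γ₂) : ℝ → ℝ² satisfying γ₁'(t) = γ₂(t) and γ₂'(t) = ((3/2)·q(γ₁(t))·p'(γ₁(t)) + p(γ₁(t))·q'(γ₁(t)))·γ₂(t) − (p'(γ₁(t))/2)·(p(γ₁(t))·q(γ₁(t))² − 1) for all t, whose image is exactly the set Γ = {(x, y) ∈ ℝ² : (y − p(x)q(x))² − p(x) = 0 and x_e ≤ x ≤ x_d}. -/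

import Mathlib

open Polynomial

open intervalIntegral MeasureTheory in
/-- Time reparametrization: for a continuous positive `P`-periodic function `lam`,
there exist `T > 0` and a surjective `σ : ℝ → ℝ` with `σ(t+T) = σ t + P` and
`σ' = lam ∘ σ`. -/
lemma reparam_exists (lam : ℝ → ℝ) (P : ℝ) (hP : 0 < P)
    (hcont : Continuous lam) (hpos : ∀ s, 0 < lam s)
    (hper : ∀ s, lam (s + P) = lam s) :
    ∃ (T : ℝ) (σ : ℝ → ℝ), 0 < T ∧ Function.Surjective σ ∧
      (∀ t, σ (t + T) = σ t + P) ∧ (∀ t, HasDerivAt σ (lam (σ t)) t) := by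
  set f : ℝ → ℝ := fun s => (lam s)⁻¹ with hf
  have hfc : Continuous f := hcont.inv₀ fun s => (hpos s).ne'
  have hfpos : ∀ s, 0 < f s := fun s => inv_pos.2 (hpos s)
  have hfper : Function.Periodic f P := fun s => by simp [hf, hper s]
  set τ : ℝ → ℝ := fun s => ∫ u in (0:ℝ)..s, f u with hτ
  have hint : ∀ a b : ℝ, IntervalIntegrable f volume a b :=
    fun a b => hfc.intervalIntegrable a b
  have hτd : ∀ s, HasDerivAt τ (f s) s := by
    intro s
    exact integral_hasDerivAt_right (hint 0 s)
      (hfc.stronglyMeasurableAtFilter _ _) hfc.continuousAt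
  have hτmono : StrictMono τ := by
    apply strictMono_of_deriv_pos
    intro s
    rw [(hτd s).deriv]
    exact hfpos s
  set T : ℝ := ∫ u in (0:ℝ)..P, f u with hT
  have hTpos : 0 < T := by
    apply intervalIntegral_pos_of_pos (hint 0 P) (fun s => hfpos s) hP
  have hτadd : ∀ s, τ (s + P) = τ s + T := by
    intro s
    have h1 : (∫ u in (0:ℝ)..s, f u) + (∫ u in s..s+P, f u) = ∫ u in (0:ℝ)..s+P, f u :=
      integral_add_adjacent_intervals (hint 0 s) (hint s (s+P))
    have h2 : (∫ u in s..s+P, f u) = ∫ u in (0:ℝ)..0+P, f u :=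
      hfper.intervalIntegral_add_eq s 0
    simp only [zero_add] at h2
    rw [hτ]; dsimp only
    rw [← h1, h2]
  have hτsurj : Function.Surjective τ := by
    intro y
    obtain ⟨n, hn⟩ := Archimedean.arch |y| hTpos
    have hτn : ∀ k : ℕ, τ (k * P) = k * T := by
      intro k
      induction k with
      | zero => simp [hτ]
      | succ k ih =>
        push_cast
        rw [add_mul, one_mul, hτadd, ih, add_mul, one_mul]
    have hτneg : ∀ k : ℕ, τ (-(k * P)) = -(k * T) := by
      intro k
      induction k with
      | zero => simp [hτ]
      | succ k ih =>
        have h := hτadd (-((k+1:ℕ) * P))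
        have he1 : -(((k+1:ℕ):ℝ) * P) + P = -((k:ℝ)*P) := by push_cast; ring
        rw [he1, ih] at h
        push_cast at h ⊢
        linarith
    have hcτ : Continuous τ := by
      have : Differentiable ℝ τ := fun s => (hτd s).differentiableAt
      exact this.continuous
    simp only [nsmul_eq_mul] at hn
    have hy1 : τ (-(n * P)) ≤ y := by
      rw [hτneg n]
      linarith [neg_abs_le y]
    have hy2 : y ≤ τ (n * P) := by
      rw [hτn n]
      linarith [le_abs_self y]
    have hsub : Set.Icc (τ (-(n*P))) (τ (n*P)) ⊆ τ '' (Set.Icc (-(n*P)) (n*P)) := by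
      apply intermediate_value_Icc _ hcτ.continuousOn
      have : (0:ℝ) ≤ n * P := by positivity
      linarith
    obtain ⟨s, _, hs⟩ := hsub ⟨hy1, hy2⟩
    exact ⟨s, hs⟩
  set e := StrictMono.orderIsoOfSurjective τ hτmono hτsurj with he
  set σ : ℝ → ℝ := fun t => e.symm t with hσ
  have hτσ : ∀ t, τ (σ t) = t := fun t => e.apply_symm_apply t
  have hστ : ∀ s, σ (τ s) = s := fun s => e.symm_apply_apply s
  have hσcont : Continuous σ := e.symm.toHomeomorph.continuous
  have hσsurj : Function.Surjective σ := fun s => ⟨τ s, hστ s⟩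
  refine ⟨T, σ, hTpos, hσsurj, ?_, ?_⟩
  · intro t
    have h1 : τ (σ t + P) = t + T := by rw [hτadd, hτσ]
    have := hστ (σ t + P)
    rw [h1] at this
    exact this
  · intro t
    have hd : HasDerivAt σ (f (σ t))⁻¹ t := by
      apply HasDerivAt.of_local_left_inverse (hσcont.continuousAt) (hτd (σ t))
        (hfpos (σ t)).ne'
      filter_upwards with y using hτσ y
    simpa [hf, inv_inv] using hd

/-- Existence of a non-constant periodic solution of the system
    ẋ = y, ẏ = ((3/2)q p' + p q')y − (p'/2)(p q² − 1)
    whose image is exactly the oval Γ of (y − p q)² − p = 0 in the band xₑ ≤ x ≤ x_d. -/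
theorem oval_is_periodic_orbit (p q : ℝ[X]) (xe xd : ℝ)
    (hxe : xe < 0) (hxd : 0 < xd)
    (hpe : p.eval xe = 0) (hpd : p.eval xd = 0)
    (hpe' : (derivative p).eval xe ≠ 0) (hpd' : (derivative p).eval xd ≠ 0)
    (hp : ∀ x ∈ Set.Ioo xe xd, 0 < p.eval x)
    (hpq : ∀ x ∈ Set.Ioo xe xd, p.eval x * (q.eval x) ^ 2 ≠ 1)
    (hq' : ∀ x ∈ Set.Ioo xe xd, (derivative q).eval x ≠ 0) :
    ∃ (T : ℝ) (γ₁ γ₂ : ℝ → ℝ), 0 < T ∧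
      (∀ t, γ₁ (t + T) = γ₁ t) ∧ (∀ t, γ₂ (t + T) = γ₂ t) ∧
      (∃ t₁ t₂ : ℝ, (γ₁ t₁, γ₂ t₁) ≠ (γ₁ t₂, γ₂ t₂)) ∧
      (∀ t, HasDerivAt γ₁ (γ₂ t) t) ∧
      (∀ t, HasDerivAt γ₂
        (((3 / 2) * q.eval (γ₁ t) * (derivative p).eval (γ₁ t)
            + p.eval (γ₁ t) * (derivative q).eval (γ₁ t)) * γ₂ t
          - ((derivative p).eval (γ₁ t) / 2)
            * (p.eval (γ₁ t) * (q.eval (γ₁ t)) ^ 2 - 1)) t) ∧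
      Set.range (fun t => (γ₁ t, γ₂ t)) =
        {z : ℝ × ℝ | (z.2 - p.eval z.1 * q.eval z.1) ^ 2 - p.eval z.1 = 0
          ∧ xe ≤ z.1 ∧ z.1 ≤ xd} := by
  have hxed : xe < xd := hxe.trans hxd
  obtain ⟨g, hg⟩ : (X - C xe) * (X - C xd) ∣ p := by
    apply IsCoprime.mul_dvd
    · exact Polynomial.isCoprime_X_sub_C_of_isUnit_sub
        (isUnit_iff_ne_zero.2 (sub_ne_zero.2 hxed.ne))
    · exact Polynomial.dvd_iff_isRoot.2 hpe
    · exact Polynomial.dvd_iff_isRoot.2 hpd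
  -- sign of g on the interior
  have hgI : ∀ x ∈ Set.Ioo xe xd, g.eval x < 0 := by
    intro x hx
    have h1 : (x - xe) * (x - xd) < 0 :=
      mul_neg_of_pos_of_neg (by linarith [hx.1]) (by linarith [hx.2])
    have h2 : 0 < (x - xe) * (x - xd) * g.eval x := by
      have := hp x hx
      rw [hg] at this
      simpa using this
    nlinarith
  -- derivative of p at the endpoints
  have hder : derivative p = ((X - C xd) + (X - C xe)) * g
      + (X - C xe) * (X - C xd) * derivative g := by
    rw [hg]
    simp [derivative_mul, derivative_sub, derivative_X, derivative_C]
  have hge : g.eval xe ≠ 0 := by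
    intro h
    apply hpe'
    rw [hder]
    simp [h]
  have hgd : g.eval xd ≠ 0 := by
    intro h
    apply hpd'
    rw [hder]
    simp [h]
  have hgxe : g.eval xe < 0 := by
    have hle : g.eval xe ≤ 0 := by
      have htd : Filter.Tendsto (fun y => g.eval y) (nhdsWithin xe (Set.Ioi xe))
          (nhds (g.eval xe)) :=
        ((g.continuous_aeval).tendsto xe).mono_left nhdsWithin_le_nhds
      refine le_of_tendsto htd ?_
      filter_upwards [Ioo_mem_nhdsGT_of_mem (Set.left_mem_Ico.2 hxed)] with y hy
      exact (hgI y hy).le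
    exact lt_of_le_of_ne hle hge
  have hgxd : g.eval xd < 0 := by
    have hle : g.eval xd ≤ 0 := by
      have htd : Filter.Tendsto (fun y => g.eval y) (nhdsWithin xd (Set.Iio xd))
          (nhds (g.eval xd)) :=
        ((g.continuous_aeval).tendsto xd).mono_left nhdsWithin_le_nhds
      refine le_of_tendsto htd ?_
      filter_upwards [Ioo_mem_nhdsLT_of_mem (Set.right_mem_Ioc.2 hxed)] with y hy
      exact (hgI y hy).le
    exact lt_of_le_of_ne hle hgd
  have hgE : ∀ x ∈ Set.Icc xe xd, g.eval x < 0 := by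
    intro x hx
    rcases eq_or_lt_of_le hx.1 with h1 | h1
    · exact h1 ▸ hgxe
    rcases eq_or_lt_of_le hx.2 with h2 | h2
    · exact h2.symm ▸ hgxd
    · exact hgI x ⟨h1, h2⟩
  -- parametrization
  set m : ℝ := (xe + xd) / 2 with hm
  set r : ℝ := (xd - xe) / 2 with hr
  have hrpos : 0 < r := by rw [hr]; linarith
  set XX : ℝ → ℝ := fun s => m - r * Real.cos s with hXX
  have hXmem : ∀ s, XX s ∈ Set.Icc xe xd := by
    intro s
    have h1 := Real.neg_one_le_cos s
    have h2 := Real.cos_le_one s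
    constructor
    · rw [hXX]; dsimp only; rw [hm, hr]; nlinarith
    · rw [hXX]; dsimp only; rw [hm, hr]; nlinarith
  set u : ℝ → ℝ := fun s => -(g.eval (XX s)) with hu
  have hupos : ∀ s, 0 < u s := fun s => neg_pos.2 (hgE (XX s) (hXmem s))
  set H : ℝ → ℝ := fun s => Real.sqrt (u s) with hH
  have hHpos : ∀ s, 0 < H s := fun s => Real.sqrt_pos.2 (hupos s)
  have hHsq : ∀ s, H s * H s = u s := fun s => Real.mul_self_sqrt (hupos s).le
  set Z : ℝ → ℝ := fun s => r * Real.sin s * H s with hZ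
  set c₂ : ℝ → ℝ := fun s => Z s + p.eval (XX s) * q.eval (XX s) with hc₂
  -- polynomial evaluations along the parametrization
  have hlin : ∀ s, (XX s - xe) * (XX s - xd) = -((r * Real.sin s) ^ 2) := by
    intro s
    have hsc := Real.sin_sq_add_cos_sq s
    rw [hXX]; dsimp only; rw [hm, hr]
    linear_combination (((xd - xe) / 2) ^ 2) * hsc
  have peval : ∀ s, p.eval (XX s) = (r * Real.sin s) ^ 2 * u s := by
    intro s
    rw [hg]
    simp only [eval_mul, eval_sub, eval_X, eval_C]
    rw [hu]; dsimp only
    linear_combination (g.eval (XX s)) * hlin s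
  have hZsq : ∀ s, Z s ^ 2 = p.eval (XX s) := by
    intro s
    rw [peval s, hZ]; dsimp only
    linear_combination ((r * Real.sin s) ^ 2) * hHsq s
  have pdeval : ∀ s, (derivative p).eval (XX s)
      = 2 * (r * Real.cos s) * u s - (r * Real.sin s) ^ 2 * (derivative g).eval (XX s) := by
    intro s
    rw [hder]
    simp only [eval_add, eval_mul, eval_sub, eval_X, eval_C]
    have h1 : XX s - xd + (XX s - xe) = -(2 * (r * Real.cos s)) := by
      rw [hXX]; dsimp only; rw [hm, hr]; ring
    have h2 := hlin s
    have h3 : u s = -(g.eval (XX s)) := by rw [hu]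
    linear_combination (g.eval (XX s)) * h1 + ((derivative g).eval (XX s)) * h2
      - (2 * (r * Real.cos s)) * h3
  set φ : ℝ → ℝ := fun s => 1 + q.eval (XX s) * Z s with hφ
  have hφne : ∀ s, φ s ≠ 0 := by
    intro s h
    have hqZ : q.eval (XX s) * Z s = -1 := by
      have : (1 : ℝ) + q.eval (XX s) * Z s = 0 := h
      linarith
    have hZne : Z s ≠ 0 := by
      intro h0
      rw [h0, mul_zero] at hqZ
      norm_num at hqZ
    have hsin : Real.sin s ≠ 0 := by
      intro h0
      apply hZne
      rw [hZ]; dsimp only; rw [h0]; ring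
    have hcos2 : Real.cos s ^ 2 < 1 := by
      nlinarith [Real.sin_sq_add_cos_sq s, sq_pos_of_ne_zero hsin]
    have hcos := abs_lt.1 ((sq_lt_one_iff_abs_lt_one _).1 hcos2)
    have hmem : XX s ∈ Set.Ioo xe xd := by
      constructor
      · rw [hXX]; dsimp only; rw [hm, hr]; nlinarith [hcos.1, hcos.2]
      · rw [hXX]; dsimp only; rw [hm, hr]; nlinarith [hcos.1, hcos.2]
    apply hpq (XX s) hmem
    linear_combination (-(q.eval (XX s)) ^ 2) * hZsq s
      + (q.eval (XX s) * Z s - 1) * hqZ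
  have hXc : Continuous XX := by
    rw [hXX]
    exact continuous_const.sub (continuous_const.mul Real.continuous_cos)
  have huc : Continuous u := by
    rw [hu]
    exact (g.continuous.comp hXc).neg
  have hHc : Continuous H := by
    rw [hH]
    exact Real.continuous_sqrt.comp huc
  have hZc : Continuous Z := by
    rw [hZ]
    exact (continuous_const.mul Real.continuous_sin).mul hHc
  have hφc : Continuous φ := by
    rw [hφ]
    exact continuous_const.add ((q.continuous.comp hXc).mul hZc)
  have hφ0 : φ 0 = 1 := by
    rw [hφ, hZ]; simp
  have hφpos : ∀ s, 0 < φ s := by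
    intro s
    rcases lt_trichotomy (φ s) 0 with h | h | h
    · exfalso
      have hmem : (0:ℝ) ∈ Set.uIcc (φ s) (φ 0) := by
        rw [hφ0]
        exact Set.mem_uIcc.2 (Or.inl ⟨h.le, zero_le_one⟩)
      obtain ⟨s0, _, hs0⟩ := intermediate_value_uIcc hφc.continuousOn hmem
      exact hφne s0 hs0
    · exact absurd h (hφne s)
    · exact h
  set lam : ℝ → ℝ := fun s => H s * φ s with hlam
  have hlampos : ∀ s, 0 < lam s := fun s => mul_pos (hHpos s) (hφpos s)
  have hlamc : Continuous lam := hHc.mul hφc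
  have hXper : ∀ s, XX (s + 2 * Real.pi) = XX s := by
    intro s
    rw [hXX]; dsimp only; rw [Real.cos_add_two_pi]
  have hHper : ∀ s, H (s + 2 * Real.pi) = H s := by
    intro s
    rw [hH]; dsimp only; rw [hu]; dsimp only; rw [hXper s]
  have hZper : ∀ s, Z (s + 2 * Real.pi) = Z s := by
    intro s
    rw [hZ]; dsimp only; rw [Real.sin_add_two_pi, hHper s]
  have hlamper : ∀ s, lam (s + 2 * Real.pi) = lam s := by
    intro s
    rw [hlam]; dsimp only
    rw [hφ]; dsimp only
    rw [hXper s, hZper s, hHper s]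
  -- derivatives
  have hXd : ∀ s, HasDerivAt XX (r * Real.sin s) s := by
    intro s
    have h := HasDerivAt.const_sub m ((Real.hasDerivAt_cos s).const_mul r)
    rw [hXX]
    rw [show r * Real.sin s = -(r * -Real.sin s) by ring]
    exact h
  have hud : ∀ s, HasDerivAt u (-((derivative g).eval (XX s) * (r * Real.sin s))) s := by
    intro s
    have h := ((g.hasDerivAt (XX s)).comp s (hXd s)).neg
    rw [hu]
    exact h
  have hHd : ∀ s, HasDerivAt H
      (1 / (2 * H s) * -((derivative g).eval (XX s) * (r * Real.sin s))) s := by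
    intro s
    have h := (Real.hasDerivAt_sqrt (hupos s).ne').comp s (hud s)
    rw [hH]
    exact h
  have hZd : ∀ s, HasDerivAt Z
      (r * Real.cos s * H s + r * Real.sin s *
        (1 / (2 * H s) * -((derivative g).eval (XX s) * (r * Real.sin s)))) s := by
    intro s
    have h := ((Real.hasDerivAt_sin s).const_mul r).mul (hHd s)
    rw [hZ]
    exact h
  have hc₂d : ∀ s, HasDerivAt c₂
      ((r * Real.cos s * H s + r * Real.sin s *
        (1 / (2 * H s) * -((derivative g).eval (XX s) * (r * Real.sin s))))
       + ((derivative p).eval (XX s) * (r * Real.sin s) * q.eval (XX s)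
          + p.eval (XX s) * ((derivative q).eval (XX s) * (r * Real.sin s)))) s := by
    intro s
    have hpd2 := (p.hasDerivAt (XX s)).comp s (hXd s)
    have hqd2 := (q.hasDerivAt (XX s)).comp s (hXd s)
    have h := (hZd s).add (hpd2.mul hqd2)
    rw [hc₂]
    exact h
  -- key identities
  have key1 : ∀ s, lam s * (r * Real.sin s) = c₂ s := by
    intro s
    have hz := hZsq s
    have hZs : Z s = r * Real.sin s * H s := rfl
    have hφs : φ s = 1 + q.eval (XX s) * Z s := rfl
    have hc2s : c₂ s = Z s + p.eval (XX s) * q.eval (XX s) := rfl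
    have hls : lam s = H s * φ s := rfl
    rw [hZs] at hz
    rw [hls, hc2s, hφs, hZs]
    linear_combination (q.eval (XX s)) * hz
  have key0 : ∀ s, (r * Real.cos s * H s + r * Real.sin s *
        (1 / (2 * H s) * -((derivative g).eval (XX s) * (r * Real.sin s)))) * lam s
      = (derivative p).eval (XX s) / 2 * φ s := by
    intro s
    have hHne : H s ≠ 0 := (hHpos s).ne'
    have hls : lam s = H s * φ s := rfl
    have hsq := hHsq s
    have hhalf : 1 / (2 * H s) * H s = 1 / 2 := by
      field_simp
    rw [hls, pdeval s]
    linear_combination (r * Real.cos s * φ s) * hsq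
      + (r * Real.sin s * -((derivative g).eval (XX s) * (r * Real.sin s)) * φ s) * hhalf
  have key2 : ∀ s, ((r * Real.cos s * H s + r * Real.sin s *
        (1 / (2 * H s) * -((derivative g).eval (XX s) * (r * Real.sin s))))
       + ((derivative p).eval (XX s) * (r * Real.sin s) * q.eval (XX s)
          + p.eval (XX s) * ((derivative q).eval (XX s) * (r * Real.sin s)))) * lam s
      = (3 / 2 * q.eval (XX s) * (derivative p).eval (XX s)
          + p.eval (XX s) * (derivative q).eval (XX s)) * c₂ s
        - ((derivative p).eval (XX s) / 2) * (p.eval (XX s) * q.eval (XX s) ^ 2 - 1) := by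
    intro s
    have h0 := key0 s
    have h1 := key1 s
    have hφs : φ s = 1 + q.eval (XX s) * Z s := rfl
    have hc2s : c₂ s = Z s + p.eval (XX s) * q.eval (XX s) := rfl
    linear_combination h0 + ((derivative p).eval (XX s) * q.eval (XX s)
        + p.eval (XX s) * (derivative q).eval (XX s)) * h1
      + ((derivative p).eval (XX s) / 2) * hφs
      + (-((derivative p).eval (XX s) * q.eval (XX s)) / 2) * hc2s
  -- time reparametrization
  obtain ⟨T, σ, hT, hσsurj, hσper, hσd⟩ :=
    reparam_exists lam (2 * Real.pi) (by positivity) hlamc hlampos hlamper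
  have hc₂per : ∀ s, c₂ (s + 2 * Real.pi) = c₂ s := by
    intro s
    rw [hc₂]; dsimp only
    rw [hZper, hXper]
  have hxe' : xe = m - r := by rw [hm, hr]; ring
  have hxd' : xd = m + r := by rw [hm, hr]; ring
  refine ⟨T, fun t => XX (σ t), fun t => c₂ (σ t), hT, ?_, ?_, ?_, ?_, ?_, ?_⟩
  · intro t
    show XX (σ (t + T)) = XX (σ t)
    rw [hσper t, hXper]
  · intro t
    show c₂ (σ (t + T)) = c₂ (σ t)
    rw [hσper t, hc₂per]
  · obtain ⟨t₁, ht₁⟩ := hσsurj 0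
    obtain ⟨t₂, ht₂⟩ := hσsurj Real.pi
    refine ⟨t₁, t₂, fun hcontra => ?_⟩
    have h1 : XX (σ t₁) = XX (σ t₂) := congrArg Prod.fst hcontra
    rw [ht₁, ht₂, hXX] at h1
    dsimp only at h1
    rw [Real.cos_zero, Real.cos_pi] at h1
    nlinarith [hrpos, h1]
  · intro t
    have h := (hXd (σ t)).comp t (hσd t)
    have he : r * Real.sin (σ t) * lam (σ t) = c₂ (σ t) := by
      rw [← key1 (σ t)]; ring
    rw [he] at h
    simpa [Function.comp_def] using h
  · intro t
    have h := (hc₂d (σ t)).comp t (hσd t)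
    rw [key2 (σ t)] at h
    simpa [Function.comp_def] using h
  · ext z
    constructor
    · rintro ⟨t, rfl⟩
      dsimp only
      refine ⟨?_, (hXmem (σ t)).1, (hXmem (σ t)).2⟩
      have he : c₂ (σ t) - p.eval (XX (σ t)) * q.eval (XX (σ t)) = Z (σ t) := by
        rw [hc₂]; dsimp only; ring
      rw [he, hZsq (σ t), sub_self]
    · rintro ⟨h1, h2, h3⟩
      obtain ⟨x, y⟩ := z
      dsimp only at h1 h2 h3 ⊢
      have hb1 : -1 ≤ (m - x) / r := by
        rw [le_div_iff₀ hrpos]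
        rw [hxd'] at h3
        linarith
      have hb2 : (m - x) / r ≤ 1 := by
        rw [div_le_iff₀ hrpos]
        rw [hxe'] at h2
        linarith
      set s₀ := Real.arccos ((m - x) / r) with hs₀
      have hcos : Real.cos s₀ = (m - x) / r := Real.cos_arccos hb1 hb2
      have hXs₀ : XX s₀ = x := by
        rw [hXX]; dsimp only; rw [hcos]
        field_simp
        ring
      have hsin₀ : 0 ≤ Real.sin s₀ :=
        Real.sin_nonneg_of_nonneg_of_le_pi (Real.arccos_nonneg _) (Real.arccos_le_pi _)
      have hw : (y - p.eval x * q.eval x) ^ 2 = p.eval x := by linarith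
      have hZ0 : Z s₀ ^ 2 = (y - p.eval x * q.eval x) ^ 2 := by
        rw [hZsq s₀, hXs₀, hw]
      have hc2rfl : ∀ s, c₂ s = Z s + p.eval (XX s) * q.eval (XX s) := fun s => rfl
      rcases sq_eq_sq_iff_eq_or_eq_neg.1 hZ0 with hcase | hcase
      · obtain ⟨t, ht⟩ := hσsurj s₀
        refine ⟨t, ?_⟩
        dsimp only
        rw [ht, hXs₀, hc2rfl s₀, hXs₀, hcase]
        rw [Prod.mk.injEq]
        exact ⟨rfl, by ring⟩
      · obtain ⟨t, ht⟩ := hσsurj (-s₀)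
        have hXneg : XX (-s₀) = x := by
          rw [hXX]; dsimp only
          rw [Real.cos_neg, hcos]
          field_simp
          ring
        have hXX' : XX (-s₀) = XX s₀ := by rw [hXneg, hXs₀]
        have hHneg : H (-s₀) = H s₀ := by
          rw [hH, hu]; dsimp only
          rw [hXX']
        have hZneg : Z (-s₀) = -Z s₀ := by
          rw [hZ]; dsimp only
          rw [Real.sin_neg, hHneg]
          ring
        refine ⟨t, ?_⟩
        dsimp only
        rw [ht, hXneg, hc2rfl (-s₀), hXneg, hZneg, hcase]
        rw [Prod.mk.injEq]
        exact ⟨rfl, by ring⟩
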